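/- arXiv:1802.02543 — 3 statements merged into one kernel-verified Lean document; each statement's English description precedes it below -/
import Mathlib

section
/- Let α : ℝ → [a,b] ⊂ (0,1) be continuously differentiable with bounded derivative, and let M = sup_ξ |α'(ξ)|/α(ξ)². Then for all y, u, v ∈ ℝ, |sign(y)|y|^{-1/α(v)} − sign(y)|y|^{-1/α(u)}| ≤ M · |v − u| · max{|y|^{-1/a}(1 + |log|y||), |y|^{-1/b}(1 + |log|y||)}. -/
open MeasureTheory Filter Set

noncomputable def spow (r s : ℝ) : ℝ := Real.sign r * |r| ^ s

noncomputable def wab (a b y : ℝ) : ℝ :=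
  max (|y| ^ (-1 / a) * (1 + abs (Real.log (abs y)))) (|y| ^ (-1 / b) * (1 + abs (Real.log (abs y))))

noncomputable def Mconst (α : ℝ → ℝ) : ℝ := ⨆ ξ : ℝ, |deriv α ξ| / (α ξ) ^ 2

/-- Càdlàg on `[t₀,t₁)`: right-continuous on `[t₀,t₁)` and left limits exist on `(t₀,t₁]`. -/
def CadlagOn (f : ℝ → ℝ) (t₀ t₁ : ℝ) : Prop :=
  (∀ u ∈ Set.Ico t₀ t₁, Filter.Tendsto f (nhdsWithin u (Set.Ioi u)) (nhds (f u))) ∧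
  (∀ u ∈ Set.Ioc t₀ t₁, ∃ L, Filter.Tendsto f (nhdsWithin u (Set.Iio u)) (nhds L))

/-- The sum `∑_{(x,y)∈Λ} 1_{(t₀,t]}(x) y^⟨-1/α(f(x₋))⟩`. -/
noncomputable def jumpSum (α : ℝ → ℝ) (Λ : Set (ℝ × ℝ)) (t₀ t : ℝ) (f : ℝ → ℝ) : ℝ :=
  ∑' p : Λ, if (p : ℝ × ℝ).1 ∈ Set.Ioc t₀ t
    then spow (p : ℝ × ℝ).2 (-1 / α (Function.leftLim f (p : ℝ × ℝ).1)) else 0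

/-- The truncated sum over points with `|y| ≤ n`. -/
noncomputable def jumpSumTrunc (α : ℝ → ℝ) (Λ : Set (ℝ × ℝ)) (n : ℝ) (t₀ t : ℝ) (f : ℝ → ℝ) : ℝ :=
  ∑' p : Λ, if |(p : ℝ × ℝ).2| ≤ n ∧ (p : ℝ × ℝ).1 ∈ Set.Ioc t₀ t
    then spow (p : ℝ × ℝ).2 (-1 / α (Function.leftLim f (p : ℝ × ℝ).1)) else 0


theorem stmt0_aux (a b : ℝ) (ha : 0 < a) (hab : a < b) (hb1 : b < 1)
    (α : ℝ → ℝ) (hrange : ∀ x, α x ∈ Set.Icc a b) (hsmooth : ContDiff ℝ 1 α)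
    (hbd : ∃ C, ∀ x, |deriv α x| ≤ C) (y u v : ℝ)
    (Mconst : ℝ) (hMdef : Mconst = ⨆ ξ : ℝ, |deriv α ξ| / (α ξ) ^ 2)
    (wab : ℝ) (hwdef : wab = max (|y| ^ (-1 / a) * (1 + abs (Real.log (abs y))))
      (|y| ^ (-1 / b) * (1 + abs (Real.log (abs y))))) :
    |Real.sign y * |y| ^ (-1 / α v) - Real.sign y * |y| ^ (-1 / α u)|
      ≤ Mconst * |v - u| * wab := by
  obtain ⟨C, hC⟩ := hbd
  have hM0 : 0 ≤ Mconst := by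
    rw [hMdef]
    exact Real.iSup_nonneg fun ξ => div_nonneg (abs_nonneg _) (sq_nonneg _)
  have hbdd : BddAbove (Set.range fun ξ : ℝ => |deriv α ξ| / (α ξ) ^ 2) := by
    refine ⟨C / a ^ 2, ?_⟩
    rintro _ ⟨ξ, rfl⟩
    have h1 : a ≤ α ξ := (hrange ξ).1
    have h2 : a ^ 2 ≤ (α ξ) ^ 2 := by nlinarith [ha.le]
    exact div_le_div₀ (le_trans (abs_nonneg _) (hC 0)) (hC ξ) (by positivity) h2
  have hMle : ∀ ξ, |deriv α ξ| / (α ξ) ^ 2 ≤ Mconst := by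
    intro ξ; rw [hMdef]; exact le_ciSup hbdd ξ
  rcases eq_or_ne y 0 with rfl | hy
  · simp only [Real.sign_zero, zero_mul, sub_zero, abs_zero]
    have hw0 : 0 ≤ wab := by
      rw [hwdef]
      exact le_max_of_le_left (by positivity)
    positivity
  · have hc : (0:ℝ) < |y| := abs_pos.mpr hy
    set c := |y| with hcdef
    -- bound on c ^ t for t ∈ [-1/a, -1/b]
    have hKey : ∀ t, -1/a ≤ t → t ≤ -1/b → c ^ t ≤ max (c ^ (-1/a)) (c ^ (-1/b)) := by
      intro t h1 h2
      rcases le_total c 1 with h | h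
      · exact le_max_of_le_left (Real.rpow_le_rpow_of_exponent_ge hc h h1)
      · exact le_max_of_le_right (Real.rpow_le_rpow_of_exponent_le h h2)
    have hrangeE : ∀ ξ, -1/a ≤ -1 / α ξ ∧ -1 / α ξ ≤ -1/b := by
      intro ξ
      obtain ⟨h1, h2⟩ := hrange ξ
      have hαpos : 0 < α ξ := lt_of_lt_of_le ha h1
      constructor
      · rw [neg_div, neg_div, neg_le_neg_iff]
        exact one_div_le_one_div_of_le ha h1
      · rw [neg_div, neg_div, neg_le_neg_iff]
        exact one_div_le_one_div_of_le hαpos h2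
    -- the function and its derivative
    have hderiv : ∀ ξ, HasDerivAt (fun ξ => c ^ (-1 / α ξ))
        (c ^ (-1 / α ξ) * Real.log c * (deriv α ξ / (α ξ) ^ 2)) ξ := by
      intro ξ
      have hαξ : α ξ ≠ 0 := ne_of_gt (lt_of_lt_of_le ha (hrange ξ).1)
      have hα : HasDerivAt α (deriv α ξ) ξ :=
        ((hsmooth.differentiable one_ne_zero) ξ).hasDerivAt
      have hg : HasDerivAt (fun ξ => -1 / α ξ)
          (-((-1) * deriv α ξ) / (α ξ) ^ 2) ξ := by
        have h := (hasDerivAt_const ξ (-1:ℝ)).div hα hαξ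
        exact h.congr_deriv (by ring)
      have := (Real.hasStrictDerivAt_const_rpow hc (-1 / α ξ)).hasDerivAt.comp ξ hg
      exact this.congr_deriv (by ring)
    have hCbound : ∀ ξ, ‖c ^ (-1 / α ξ) * Real.log c * (deriv α ξ / (α ξ) ^ 2)‖
        ≤ Mconst * wab := by
      intro ξ
      rw [Real.norm_eq_abs, abs_mul, abs_mul, abs_div, abs_of_nonneg (Real.rpow_nonneg hc.le _),
        abs_of_nonneg (sq_nonneg (α ξ))]
      have h1 : c ^ (-1 / α ξ) * |Real.log c| ≤ max (c ^ (-1/a)) (c ^ (-1/b)) * (1 + |Real.log c|) := by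
        have := hKey _ (hrangeE ξ).1 (hrangeE ξ).2
        have h2 : |Real.log c| ≤ 1 + |Real.log c| := by linarith
        exact mul_le_mul this h2 (abs_nonneg _) (le_trans (Real.rpow_nonneg hc.le _) this)
      have hw : wab = max (c ^ (-1/a)) (c ^ (-1/b)) * (1 + |Real.log c|) := by
        rw [hwdef, max_mul_of_nonneg _ _ (by positivity : (0:ℝ) ≤ 1 + |Real.log (|y|)|)]
      rw [hw]
      calc c ^ (-1 / α ξ) * |Real.log c| * (|deriv α ξ| / (α ξ) ^ 2)
          ≤ (max (c ^ (-1/a)) (c ^ (-1/b)) * (1 + |Real.log c|)) * Mconst :=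
            mul_le_mul h1 (hMle ξ) (by positivity) (by positivity)
        _ = Mconst * (max (c ^ (-1/a)) (c ^ (-1/b)) * (1 + |Real.log c|)) := by ring
    -- MVT on univ
    have hmvt := Convex.norm_image_sub_le_of_norm_hasDerivWithin_le
      (f := fun ξ => c ^ (-1 / α ξ)) (C := Mconst * wab)
      (fun ξ _ => (hderiv ξ).hasDerivWithinAt) (fun ξ _ => hCbound ξ)
      convex_univ (Set.mem_univ u) (Set.mem_univ v)
    have hsign : |Real.sign y| = 1 := by
      rcases lt_or_gt_of_ne hy with h | h
      · rw [Real.sign_of_neg h]; norm_num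
      · rw [Real.sign_of_pos h]; norm_num
    calc |Real.sign y * c ^ (-1 / α v) - Real.sign y * c ^ (-1 / α u)|
        = |Real.sign y| * |c ^ (-1 / α v) - c ^ (-1 / α u)| := by
          rw [← abs_mul, mul_sub]
      _ = |c ^ (-1 / α v) - c ^ (-1 / α u)| := by rw [hsign, one_mul]
      _ ≤ Mconst * wab * |v - u| := by
          simpa [Real.norm_eq_abs] using hmvt
      _ = Mconst * |v - u| * wab := by ring

/-- Mean value estimate: `|y^⟨-1/α(v)⟩ - y^⟨-1/α(u)⟩| ≤ M |v-u| |y|^{-1/(a,b)}`. -/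
theorem stmt0 (a b : ℝ) (ha : 0 < a) (hab : a < b) (hb1 : b < 1)
    (α : ℝ → ℝ) (hrange : ∀ x, α x ∈ Set.Icc a b) (hsmooth : ContDiff ℝ 1 α)
    (hbd : ∃ C, ∀ x, |deriv α x| ≤ C) (y u v : ℝ) :
    |spow y (-1 / α v) - spow y (-1 / α u)| ≤ Mconst α * |v - u| * wab a b y :=
  stmt0_aux a b ha hab hb1 α hrange hsmooth hbd y u v (Mconst α) rfl (wab a b y) rfl
end

section
/- Let Π ⊂ (t₀,t₁) × ℝ be countable with Σ_{(x,y)∈Π} |y|^{-1/b'} < ∞ for some b < b' < 1, let α : ℝ → [a,b] be continuously differentiable with bounded derivative, and a₀ ∈ ℝ. Define K on the space D[t₀,t₁) of càdlàg functions by K(f)(t) = a₀ + Σ_{(x,y)∈Π} 1_{(t₀,t]}(x) y^⟨−1/α(f(x₋))⟩. Then K maps D[t₀,t₁) into itself, i.e. K(f) is right-continuous with left limits on [t₀,t₁). -/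
open MeasureTheory Filter Set

lemma abs_spow_le (r s : ℝ) : |spow r s| ≤ |r| ^ s := by
  rw [spow, abs_mul, abs_of_nonneg (Real.rpow_nonneg (abs_nonneg r) s)]
  calc |Real.sign r| * |r| ^ s ≤ 1 * |r| ^ s := by
        apply mul_le_mul_of_nonneg_right _ (Real.rpow_nonneg (abs_nonneg r) s)
        rcases Real.sign_apply_eq r with h | h | h <;> rw [h] <;> norm_num
    _ = |r| ^ s := one_mul _

/-- The operator K maps the càdlàg functions on [t₀,t₁) into themselves. -/
theorem stmt2 (a b b' t₀ t₁ a₀ : ℝ) (ha : 0 < a) (hab : a < b) (hbb' : b < b') (hb1 : b' < 1)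
    (ht : t₀ < t₁)
    (α : ℝ → ℝ) (hrange : ∀ x, α x ∈ Set.Icc a b) (hsmooth : ContDiff ℝ 1 α)
    (hbd : ∃ C, ∀ x, |deriv α x| ≤ C)
    (Λ : Set (ℝ × ℝ)) (hcount : Λ.Countable)
    (hsubΛ : Λ ⊆ Set.Ioo t₀ t₁ ×ˢ (Set.univ : Set ℝ))
    (hΛ : Summable fun p : Λ => |(p : ℝ × ℝ).2| ^ (-1 / b'))
    (f : ℝ → ℝ) (hf : CadlagOn f t₀ t₁) :
    CadlagOn (fun t => a₀ + jumpSum α Λ t₀ t f) t₀ t₁ := by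
  -- the (t-independent) coefficients
  set c : Λ → ℝ := fun p => spow (p : ℝ × ℝ).2 (-1 / α (Function.leftLim f (p : ℝ × ℝ).1))
    with hc_def
  -- summability of the coefficients
  have hcsum : Summable fun p : Λ => ‖c p‖ := by
    apply Summable.of_norm_bounded_eventually (g := fun p : Λ => |(p : ℝ × ℝ).2| ^ (-1 / b')) hΛ
    have hev : ∀ᶠ p : Λ in cofinite, |(p : ℝ × ℝ).2| ^ (-1 / b') < 1 :=
      hΛ.tendsto_cofinite_zero.eventually (eventually_lt_nhds one_pos)
    filter_upwards [hev] with p hp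
    rw [norm_norm, Real.norm_eq_abs]
    rcases eq_or_ne (p : ℝ × ℝ).2 0 with hz | hz
    · simp [hc_def, hz, spow]
      positivity
    · have hy1 : 1 ≤ |(p : ℝ × ℝ).2| := by
        by_contra hlt
        push_neg at hlt
        have : (1:ℝ) ≤ |(p : ℝ × ℝ).2| ^ (-1 / b') :=
          Real.one_le_rpow_of_pos_of_le_one_of_nonpos (abs_pos.mpr hz) hlt.le
            (by rw [neg_div]; exact neg_nonpos.mpr (le_of_lt (div_pos one_pos (by linarith))))
        linarith
      have hα := hrange (Function.leftLim f (p : ℝ × ℝ).1)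
      have hαpos : 0 < α (Function.leftLim f (p : ℝ × ℝ).1) := lt_of_lt_of_le ha hα.1
      have hexp : -1 / α (Function.leftLim f (p : ℝ × ℝ).1) ≤ -1 / b' := by
        rw [neg_div, neg_div, neg_le_neg_iff]
        apply one_div_le_one_div_of_le hαpos (hα.2.trans hbb'.le)
      exact (abs_spow_le _ _).trans (Real.rpow_le_rpow_of_exponent_le hy1 hexp)
  have hcsum' : Summable c := hcsum.of_norm
  constructor
  · -- right continuity
    intro u hu
    apply Tendsto.const_add
    have := tendsto_tsum_of_dominated_convergence (𝓕 := nhdsWithin u (Set.Ioi u))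
      (f := fun t (p : Λ) => if (p : ℝ × ℝ).1 ∈ Set.Ioc t₀ t then c p else 0)
      (g := fun p : Λ => if (p : ℝ × ℝ).1 ∈ Set.Ioc t₀ u then c p else 0)
      (bound := fun p => ‖c p‖) hcsum ?_ ?_
    · exact this
    · intro p
      rcases le_or_gt (p : ℝ × ℝ).1 u with hx | hx
      · apply tendsto_const_nhds.congr'
        filter_upwards [self_mem_nhdsWithin] with t (htu : t ∈ Set.Ioi u)
        have : ((p : ℝ × ℝ).1 ∈ Set.Ioc t₀ t) ↔ ((p : ℝ × ℝ).1 ∈ Set.Ioc t₀ u) := by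
          simp only [Set.mem_Ioc]
          constructor
          · rintro ⟨h1, _⟩; exact ⟨h1, hx⟩
          · rintro ⟨h1, _⟩; exact ⟨h1, hx.trans htu.le⟩
        simp [this]
      · apply tendsto_const_nhds.congr'
        have hmem : Set.Ioi u ∩ Set.Iio (p : ℝ × ℝ).1 ∈ nhdsWithin u (Set.Ioi u) :=
          inter_mem_nhdsWithin _ (Iio_mem_nhds hx)
        filter_upwards [hmem] with t htm
        have h1 : ¬ ((p : ℝ × ℝ).1 ∈ Set.Ioc t₀ t) := by
          simp only [Set.mem_Ioc, not_and, not_le]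
          intro _; exact htm.2
        have h2 : ¬ ((p : ℝ × ℝ).1 ∈ Set.Ioc t₀ u) := by
          simp only [Set.mem_Ioc, not_and, not_le]
          intro _; exact hx
        simp [h1, h2]
    · filter_upwards with t p
      split <;> simp
  · -- left limits
    intro u hu
    refine ⟨a₀ + ∑' p : Λ, if (p : ℝ × ℝ).1 ∈ Set.Ioo t₀ u then c p else 0, ?_⟩
    apply Tendsto.const_add
    have := tendsto_tsum_of_dominated_convergence (𝓕 := nhdsWithin u (Set.Iio u))
      (f := fun t (p : Λ) => if (p : ℝ × ℝ).1 ∈ Set.Ioc t₀ t then c p else 0)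
      (g := fun p : Λ => if (p : ℝ × ℝ).1 ∈ Set.Ioo t₀ u then c p else 0)
      (bound := fun p => ‖c p‖) hcsum ?_ ?_
    · exact this
    · intro p
      rcases lt_or_ge (p : ℝ × ℝ).1 u with hx | hx
      · apply tendsto_const_nhds.congr'
        have hmem : Set.Iio u ∩ Set.Ioi (p : ℝ × ℝ).1 ∈ nhdsWithin u (Set.Iio u) :=
          inter_mem_nhdsWithin _ (Ioi_mem_nhds hx)
        filter_upwards [hmem] with t htm
        have : ((p : ℝ × ℝ).1 ∈ Set.Ioc t₀ t) ↔ ((p : ℝ × ℝ).1 ∈ Set.Ioo t₀ u) := by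
          simp only [Set.mem_Ioc, Set.mem_Ioo]
          constructor
          · rintro ⟨h1, _⟩; exact ⟨h1, hx⟩
          · rintro ⟨h1, _⟩; exact ⟨h1, htm.2.le⟩
        simp [this]
      · apply tendsto_const_nhds.congr'
        filter_upwards [self_mem_nhdsWithin] with t (htu : t ∈ Set.Iio u)
        have h1 : ¬ ((p : ℝ × ℝ).1 ∈ Set.Ioc t₀ t) := by
          simp only [Set.mem_Ioc, not_and, not_le]
          intro _; exact htu.trans_le hx
        have h2 : ¬ ((p : ℝ × ℝ).1 ∈ Set.Ioo t₀ u) := by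
          simp only [Set.mem_Ioo, not_and, not_lt]
          intro _; exact hx
        simp [h1, h2]
    · filter_upwards with t p
      split <;> simp
end

section
/- Under the hypothesis that M · Σ_{(x,y)∈Π} |y|^{-1/(a,b)} < 1/2 (where M = sup |α'|/α² and |y|^{-1/(a,b)} = max{|y|^{-1/a}(1+|log|y||), |y|^{-1/b}(1+|log|y||)}), the operator K(f)(t) = a₀ + Σ_{(x,y)∈Π} 1_{(t₀,t]}(x) y^⟨−1/α(f(x₋))⟩ is a contraction on (D[t₀,t₁), ‖·‖_∞) with constant 1/2, i.e. ‖K(f) − K(g)‖_∞ ≤ (1/2)‖f − g‖_∞ for all f, g ∈ D[t₀,t₁). -/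
open MeasureTheory Filter Set

lemma wab_nonneg (a b y : ℝ) : 0 ≤ wab a b y := by
  refine le_trans ?_ (le_max_left _ _)
  positivity

lemma rpow_abs_le_max {a b c : ℝ} (ha : 0 < a) (hac : a ≤ c) (hcb : c ≤ b) (y : ℝ) :
    |y| ^ (-1/c) ≤ max (|y| ^ (-1/a)) (|y| ^ (-1/b)) := by
  have hc : 0 < c := ha.trans_le hac
  have hb : 0 < b := hc.trans_le hcb
  have hne : ∀ d : ℝ, 0 < d → -1/d ≠ 0 := by
    intro d hd
    have : -1/d < 0 := by rw [neg_div]; exact neg_neg_of_pos (by positivity)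
    exact this.ne
  rcases eq_or_ne y 0 with rfl | hy
  · simp only [abs_zero]
    rw [Real.zero_rpow (hne c hc), Real.zero_rpow (hne a ha), Real.zero_rpow (hne b hb)]
    simp
  · have hr : 0 < |y| := abs_pos.2 hy
    rcases le_or_gt 1 |y| with h1 | h1
    · refine le_trans (Real.rpow_le_rpow_of_exponent_le h1 ?_) (le_max_right _ _)
      rw [neg_div, neg_div, neg_le_neg_iff]
      exact one_div_le_one_div_of_le hc hcb
    · refine le_trans (Real.rpow_le_rpow_of_exponent_ge hr h1.le ?_) (le_max_left _ _)
      rw [neg_div, neg_div, neg_le_neg_iff]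
      exact one_div_le_one_div_of_le ha hac

lemma max_le_wab {a b : ℝ} (y : ℝ) :
    max (|y| ^ (-1/a)) (|y| ^ (-1/b)) ≤ wab a b y := by
  have h1 : (1:ℝ) ≤ 1 + abs (Real.log (abs y)) := le_add_of_nonneg_right (abs_nonneg _)
  unfold wab
  exact max_le_max (le_mul_of_one_le_right (Real.rpow_nonneg (abs_nonneg _) _) h1)
    (le_mul_of_one_le_right (Real.rpow_nonneg (abs_nonneg _) _) h1)

lemma spow_abs_le {a b c : ℝ} (ha : 0 < a) (hac : a ≤ c) (hcb : c ≤ b) (y : ℝ) :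
    |spow y (-1/c)| ≤ wab a b y := by
  unfold spow
  rw [abs_mul, abs_of_nonneg (Real.rpow_nonneg (abs_nonneg y) _)]
  rcases eq_or_ne y 0 with rfl | hy
  · simp [Real.sign_zero, wab_nonneg]
  · have hs : |Real.sign y| = 1 := by
      rcases hy.lt_or_gt with h | h
      · rw [Real.sign_of_neg h]; norm_num
      · rw [Real.sign_of_pos h]; norm_num
    rw [hs, one_mul]
    exact le_trans (rpow_abs_le_max ha hac hcb y) (max_le_wab y)

lemma spow_lip {a b M : ℝ} (ha : 0 < a) (α : ℝ → ℝ) (hrange : ∀ x, α x ∈ Set.Icc a b)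
    (hsmooth : ContDiff ℝ 1 α) (hM : ∀ ξ, |deriv α ξ| / (α ξ)^2 ≤ M)
    (y u v : ℝ) :
    |spow y (-1/α u) - spow y (-1/α v)| ≤ M * wab a b y * |u - v| := by
  have hM0 : 0 ≤ M := le_trans (by positivity) (hM 0)
  rcases eq_or_ne y 0 with rfl | hy
  · simp only [spow, Real.sign_zero, zero_mul, sub_zero, abs_zero, sub_self]
    have := wab_nonneg a b 0
    positivity
  have hr : 0 < |y| := abs_pos.2 hy
  have hαpos : ∀ t, 0 < α t := fun t => lt_of_lt_of_le ha (hrange t).1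
  set h : ℝ → ℝ := fun t => Real.exp (Real.log (abs y) * (-1 / α t)) with hh
  have hspow : ∀ t : ℝ, spow y (-1/α t) = Real.sign y * h t := by
    intro t
    rw [hh, spow, Real.rpow_def_of_pos hr]
  have hder : ∀ t, HasDerivAt h
      (Real.exp (Real.log (abs y) * (-1 / α t)) * (Real.log (abs y) * (deriv α t / (α t)^2))) t := by
    intro t
    have hα : HasDerivAt α (deriv α t) t :=
      ((hsmooth.differentiable one_ne_zero) t).hasDerivAt
    have h1 : HasDerivAt (fun s => -1 / α s)
        ((0 * α t - (-1) * deriv α t) / (α t)^2) t :=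
      (hasDerivAt_const t (-1:ℝ)).div hα (hαpos t).ne'
    have h1' : HasDerivAt (fun s => -1 / α s) (deriv α t / (α t)^2) t := by
      convert h1 using 1; ring
    have h2 : HasDerivAt (fun s => Real.log (abs y) * (-1 / α s))
        (Real.log (abs y) * (deriv α t / (α t)^2)) t := h1'.const_mul _
    exact h2.exp
  have hbound : ∀ t : ℝ,
      ‖Real.exp (Real.log (abs y) * (-1 / α t)) * (Real.log (abs y) * (deriv α t / (α t)^2))‖
        ≤ M * wab a b y := by
    intro t
    rw [Real.norm_eq_abs, abs_mul, abs_mul, Real.abs_exp,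
      ← Real.rpow_def_of_pos hr]
    have e1 : |y| ^ (-1 / α t) ≤ max (|y| ^ (-1/a)) (|y| ^ (-1/b)) :=
      rpow_abs_le_max ha (hrange t).1 (hrange t).2 y
    have e2 : |deriv α t / (α t)^2| ≤ M := by
      rw [abs_div, abs_of_nonneg (by positivity : (0:ℝ) ≤ (α t)^2)]
      exact hM t
    have e3 : max (|y| ^ (-1/a)) (|y| ^ (-1/b)) * (1 + abs (Real.log (abs y))) = wab a b y := by
      unfold wab
      rw [max_mul_of_nonneg _ _ (by positivity : (0:ℝ) ≤ 1 + abs (Real.log (abs y)))]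
    calc |y| ^ (-1 / α t) * (abs (Real.log (abs y)) * |deriv α t / (α t)^2|)
        ≤ max (|y| ^ (-1/a)) (|y| ^ (-1/b)) * ((1 + abs (Real.log (abs y))) * M) := by
          apply mul_le_mul e1 _ (by positivity) (le_max_of_le_left (by positivity))
          apply mul_le_mul (by linarith [abs_nonneg (Real.log (abs y))]) e2 (abs_nonneg _)
            (by positivity)
      _ = M * wab a b y := by rw [← e3]; ring
  have mvt := Convex.norm_image_sub_le_of_norm_hasDerivWithin_le
    (f := h) (f' := fun t => Real.exp (Real.log (abs y) * (-1 / α t)) * (Real.log (abs y) * (deriv α t / (α t)^2)))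
    (s := Set.univ) (C := M * wab a b y)
    (fun x _ => (hder x).hasDerivWithinAt) (fun x _ => hbound x) convex_univ
    (Set.mem_univ v) (Set.mem_univ u)
  rw [hspow, hspow, ← mul_sub, abs_mul]
  have hs : |Real.sign y| = 1 := by
    rcases hy.lt_or_gt with h' | h'
    · rw [Real.sign_of_neg h']; norm_num
    · rw [Real.sign_of_pos h']; norm_num
  rw [hs, one_mul]
  simpa [Real.norm_eq_abs] using mvt

lemma wab_summable {a b b' : ℝ} (ha : 0 < a) (hab : a < b) (hbb' : b < b')
    {ι : Type*} (u : ι → ℝ) (hΛ : Summable fun i => |u i| ^ (-1 / b')) :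
    Summable fun i => wab a b (u i) := by
  have hb : 0 < b := ha.trans hab
  have hb'0 : 0 < b' := hb.trans hbb'
  set δ : ℝ := 1/b - 1/b' with hδdef
  have hδ : 0 < δ := sub_pos.2 (one_div_lt_one_div_of_lt hb hbb')
  set C : ℝ := 1 + 1/δ with hCdef
  have hC0 : 0 < C := by positivity
  have key : ∀ y : ℝ, (y = 0 ∨ 1 ≤ |y|) → wab a b y ≤ C * |y| ^ (-1/b') := by
    rintro y (rfl | h1)
    · have hne : ∀ d : ℝ, 0 < d → -1/d ≠ 0 := by
        intro d hd
        have : -1/d < 0 := by rw [neg_div]; exact neg_neg_of_pos (by positivity)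
        exact this.ne
      simp only [abs_zero]
      rw [Real.zero_rpow (hne b' hb'0)]
      unfold wab
      simp only [abs_zero]
      rw [Real.zero_rpow (hne a ha), Real.zero_rpow (hne b hb)]
      simp
    · have hr : (0:ℝ) < |y| := lt_of_lt_of_le one_pos h1
      have hlog : abs (Real.log (abs y)) = Real.log (abs y) := abs_of_nonneg (Real.log_nonneg h1)
      have hmain : |y| ^ (-1/b) * (1 + abs (Real.log (abs y))) ≤ C * |y| ^ (-1/b') := by
        rw [hlog]
        have l1 : Real.log (abs y) ≤ |y| ^ δ / δ := Real.log_le_rpow_div (abs_nonneg y) hδ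
        have l2 : (1:ℝ) ≤ |y| ^ δ := Real.one_le_rpow h1 hδ.le
        have l3 : 1 + Real.log (abs y) ≤ C * |y| ^ δ := by
          rw [hCdef]
          have : |y| ^ δ / δ = (1/δ) * |y| ^ δ := by ring
          rw [this] at l1
          nlinarith
        calc |y| ^ (-1/b) * (1 + Real.log (abs y))
            ≤ |y| ^ (-1/b) * (C * |y| ^ δ) := by
              apply mul_le_mul_of_nonneg_left l3 (Real.rpow_nonneg (abs_nonneg _) _)
          _ = C * (|y| ^ (-1/b) * |y| ^ δ) := by ring
          _ = C * |y| ^ (-1/b') := by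
              rw [← Real.rpow_add hr]
              congr 1
              rw [hδdef]; ring
      refine max_le (le_trans ?_ hmain) hmain
      apply mul_le_mul_of_nonneg_right _ (by positivity)
      apply Real.rpow_le_rpow_of_exponent_le h1
      rw [neg_div, neg_div, neg_le_neg_iff]
      exact one_div_le_one_div_of_le ha hab.le
  have hfin : {i | ¬ (u i = 0 ∨ 1 ≤ |u i|)}.Finite := by
    have hev : ∀ᶠ i in Filter.cofinite, |u i| ^ (-1/b') < 1 :=
      hΛ.tendsto_cofinite_zero (gt_mem_nhds one_pos)
    refine (Filter.eventually_cofinite.1 hev).subset ?_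
    intro i hi
    push_neg at hi
    obtain ⟨hi0, hi1⟩ := hi
    have hpos : 0 < |u i| := abs_pos.2 hi0
    have : (1:ℝ) ≤ |u i| ^ (-1/b') :=
      Real.one_le_rpow_of_pos_of_le_one_of_nonpos hpos hi1.le (by rw [neg_div]; exact (neg_neg_of_pos (by positivity)).le)
    simpa using this.not_gt
  apply Summable.of_norm_bounded_eventually (g := fun i => C * (|u i| ^ (-1/b'))) (hΛ.mul_left C)
  rw [Filter.eventually_cofinite]
  refine hfin.subset ?_
  intro i hi
  simp only [Set.mem_setOf_eq] at hi ⊢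
  intro hgood
  apply hi
  rw [Real.norm_eq_abs, abs_of_nonneg (wab_nonneg a b (u i))]
  exact key (u i) hgood

lemma cadlag_bdd {f : ℝ → ℝ} {t₀ t₁ : ℝ} (hf : CadlagOn f t₀ t₁) :
    ∃ C, ∀ t ∈ Set.Ico t₀ t₁, |f t| ≤ C := by
  have H : ∃ C, ∀ t ∈ Set.Icc t₀ t₁ ∩ Set.Ico t₀ t₁, |f t| ≤ C := by
    refine (isCompact_Icc (a := t₀) (b := t₁)).induction_on
      (p := fun s => ∃ C, ∀ t ∈ s ∩ Set.Ico t₀ t₁, |f t| ≤ C)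
      ⟨0, by simp⟩ ?_ ?_ ?_
    · rintro s t hst ⟨C, hC⟩
      exact ⟨C, fun x hx => hC x ⟨hst hx.1, hx.2⟩⟩
    · rintro s t ⟨C1, hC1⟩ ⟨C2, hC2⟩
      refine ⟨max C1 C2, ?_⟩
      rintro x ⟨hx | hx, hx'⟩
      · exact le_trans (hC1 x ⟨hx, hx'⟩) (le_max_left _ _)
      · exact le_trans (hC2 x ⟨hx, hx'⟩) (le_max_right _ _)
    · intro x hx
      obtain ⟨A, hA, CA, hCA⟩ : ∃ A ∈ nhdsWithin x (Set.Iio x), ∃ C,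
          ∀ s ∈ A, s ∈ Set.Ico t₀ t₁ → |f s| ≤ C := by
        rcases le_or_gt x t₀ with hx0 | hx0
        · exact ⟨Set.Iio x, self_mem_nhdsWithin, 0,
            fun s hs hs' => absurd (lt_of_lt_of_le hs hx0) (not_lt.2 hs'.1)⟩
        · obtain ⟨L, hL⟩ := hf.2 x ⟨hx0, hx.2⟩
          have hev : ∀ᶠ s in nhdsWithin x (Set.Iio x), |f s| ≤ |L| + 1 :=
            (hL.abs.eventually_lt_const (lt_add_one |L|)).mono fun s hs => hs.le
          exact ⟨_, hev, |L| + 1, fun s hs _ => hs⟩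
      obtain ⟨B, hB, CB, hCB⟩ : ∃ B ∈ nhdsWithin x (Set.Ioi x), ∃ C,
          ∀ s ∈ B, s ∈ Set.Ico t₀ t₁ → |f s| ≤ C := by
        rcases lt_or_ge x t₁ with hx1 | hx1
        · have hL := hf.1 x ⟨hx.1, hx1⟩
          have hev : ∀ᶠ s in nhdsWithin x (Set.Ioi x), |f s| ≤ |f x| + 1 :=
            (hL.abs.eventually_lt_const (lt_add_one |f x|)).mono fun s hs => hs.le
          exact ⟨_, hev, |f x| + 1, fun s hs _ => hs⟩
        · exact ⟨Set.Ioi x, self_mem_nhdsWithin, 0,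
            fun s hs hs' => absurd (lt_of_le_of_lt hx1 hs) (not_lt.2 hs'.2.le)⟩
      obtain ⟨l, hl, hlA⟩ := mem_nhdsLT_iff_exists_Ioo_subset.1 hA
      obtain ⟨r, hr, hrB⟩ := mem_nhdsGT_iff_exists_Ioo_subset.1 hB
      refine ⟨Set.Ioo l r, mem_nhdsWithin_of_mem_nhds (Ioo_mem_nhds hl hr),
        max (max CA CB) |f x|, ?_⟩
      rintro s ⟨hs, hs'⟩
      rcases lt_trichotomy s x with h | rfl | h
      · exact le_trans (hCA s (hlA ⟨hs.1, h⟩) hs') (le_trans (le_max_left _ _) (le_max_left _ _))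
      · exact le_max_right _ _
      · exact le_trans (hCB s (hrB ⟨h, hs.2⟩) hs') (le_trans (le_max_right _ _) (le_max_left _ _))
  obtain ⟨C, hC⟩ := H
  exact ⟨C, fun t ht => hC t ⟨⟨ht.1, ht.2.le⟩, ht⟩⟩

/-- Under the smallness condition, K is a (1/2)-contraction in the supremum norm. -/
theorem stmt3 (a b b' t₀ t₁ a₀ : ℝ) (ha : 0 < a) (hab : a < b) (hbb' : b < b') (hb1 : b' < 1)
    (ht : t₀ < t₁)
    (α : ℝ → ℝ) (hrange : ∀ x, α x ∈ Set.Icc a b) (hsmooth : ContDiff ℝ 1 α)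
    (hbd : ∃ C, ∀ x, |deriv α x| ≤ C)
    (Λ : Set (ℝ × ℝ)) (hcount : Λ.Countable)
    (hsubΛ : Λ ⊆ Set.Ioo t₀ t₁ ×ˢ (Set.univ : Set ℝ))
    (hΛ : Summable fun p : Λ => |(p : ℝ × ℝ).2| ^ (-1 / b'))
    (hcontr : Mconst α * (∑' p : Λ, wab a b (p : ℝ × ℝ).2) < 1 / 2)
    (f g : ℝ → ℝ) (hf : CadlagOn f t₀ t₁) (hg : CadlagOn g t₀ t₁) :
    (⨆ t : Set.Ico t₀ t₁, |(a₀ + jumpSum α Λ t₀ (t : ℝ) f) - (a₀ + jumpSum α Λ t₀ (t : ℝ) g)|)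
      ≤ (1 / 2) * ⨆ t : Set.Ico t₀ t₁, |f (t : ℝ) - g (t : ℝ)| := by
  set S : ℝ := ⨆ t : Set.Ico t₀ t₁, |f (t : ℝ) - g (t : ℝ)| with hSdef
  have hS0 : 0 ≤ S := Real.iSup_nonneg fun _ => abs_nonneg _
  -- bounds for Mconst
  obtain ⟨Cd, hCd⟩ := hbd
  have hCd0 : 0 ≤ Cd := le_trans (abs_nonneg _) (hCd 0)
  have hMbdd : BddAbove (Set.range fun ξ => |deriv α ξ| / (α ξ) ^ 2) := by
    refine ⟨Cd / a ^ 2, ?_⟩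
    rintro _ ⟨ξ, rfl⟩
    exact div_le_div₀ hCd0 (hCd ξ) (by positivity)
      (pow_le_pow_left₀ ha.le (hrange ξ).1 2)
  have hM : ∀ ξ, |deriv α ξ| / (α ξ) ^ 2 ≤ Mconst α := fun ξ => le_ciSup hMbdd ξ
  have hM0 : 0 ≤ Mconst α := le_trans (by positivity) (hM 0)
  -- summability of wab
  have hwab : Summable fun p : Λ => wab a b (p : ℝ × ℝ).2 :=
    wab_summable ha hab hbb' (fun p : Λ => (p : ℝ × ℝ).2) hΛ
  -- boundedness of |f - g| on Ico
  obtain ⟨Cf, hCf⟩ := cadlag_bdd hf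
  obtain ⟨Cg, hCg⟩ := cadlag_bdd hg
  have hbddfg : BddAbove (Set.range fun t : Set.Ico t₀ t₁ => |f (t : ℝ) - g (t : ℝ)|) := by
    refine ⟨Cf + Cg, ?_⟩
    rintro _ ⟨q, rfl⟩
    calc |f (q : ℝ) - g (q : ℝ)| ≤ |f (q : ℝ)| + |g (q : ℝ)| := abs_sub _ _
      _ ≤ Cf + Cg := add_le_add (hCf _ q.2) (hCg _ q.2)
  have hle : ∀ q : Set.Ico t₀ t₁, |f (q : ℝ) - g (q : ℝ)| ≤ S := fun q => le_ciSup hbddfg q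
  -- left limit bound
  have hLL : ∀ x : ℝ, x ∈ Set.Ioo t₀ t₁ →
      |Function.leftLim f x - Function.leftLim g x| ≤ S := by
    intro x hx
    obtain ⟨Lf, hLf⟩ := hf.2 x ⟨hx.1, hx.2.le⟩
    obtain ⟨Lg, hLg⟩ := hg.2 x ⟨hx.1, hx.2.le⟩
    have hnb : nhdsWithin x (Set.Iio x) ≠ ⊥ := (inferInstance : (nhdsWithin x (Set.Iio x)).NeBot).ne'
    rw [leftLim_eq_of_tendsto hLf, leftLim_eq_of_tendsto hLg]
    refine le_of_tendsto ((hLf.sub hLg).abs) ?_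
    filter_upwards [Ioo_mem_nhdsLT_of_mem (⟨hx.1, le_refl x⟩ : x ∈ Set.Ioc t₀ x)] with s hs
    exact hle ⟨s, ⟨hs.1.le, hs.2.trans hx.2⟩⟩
  -- pointwise bound for each t
  have key : ∀ t : Set.Ico t₀ t₁,
      |(a₀ + jumpSum α Λ t₀ (t : ℝ) f) - (a₀ + jumpSum α Λ t₀ (t : ℝ) g)| ≤ (1/2) * S := by
    intro t
    rw [add_sub_add_left_eq_sub]
    set F : Λ → ℝ := fun p => if (p : ℝ × ℝ).1 ∈ Set.Ioc t₀ (t : ℝ)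
      then spow (p : ℝ × ℝ).2 (-1 / α (Function.leftLim f (p : ℝ × ℝ).1)) else 0 with hFdef
    set G : Λ → ℝ := fun p => if (p : ℝ × ℝ).1 ∈ Set.Ioc t₀ (t : ℝ)
      then spow (p : ℝ × ℝ).2 (-1 / α (Function.leftLim g (p : ℝ × ℝ).1)) else 0 with hGdef
    have habs : ∀ (h : ℝ → ℝ) (p : Λ), |(if (p : ℝ × ℝ).1 ∈ Set.Ioc t₀ (t : ℝ)
        then spow (p : ℝ × ℝ).2 (-1 / α (Function.leftLim h (p : ℝ × ℝ).1)) else 0)|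
          ≤ wab a b (p : ℝ × ℝ).2 := by
      intro h p
      split
      · exact spow_abs_le ha (hrange _).1 (hrange _).2 _
      · simpa using wab_nonneg a b (p : ℝ × ℝ).2
    have hFsum : Summable F := by
      apply Summable.of_norm_bounded hwab
      intro p
      rw [Real.norm_eq_abs]
      exact habs f p
    have hGsum : Summable G := by
      apply Summable.of_norm_bounded hwab
      intro p
      rw [Real.norm_eq_abs]
      exact habs g p
    have hdiff : ∀ p : Λ, |F p - G p| ≤ Mconst α * wab a b (p : ℝ × ℝ).2 * S := by
      intro p
      rw [hFdef, hGdef]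
      by_cases hc : (p : ℝ × ℝ).1 ∈ Set.Ioc t₀ (t : ℝ)
      · simp only [if_pos hc]
        refine le_trans (spow_lip ha α hrange hsmooth hM _ _ _) ?_
        exact mul_le_mul_of_nonneg_left
          (hLL _ (hsubΛ p.2).1) (mul_nonneg hM0 (wab_nonneg a b _))
      · simp only [if_neg hc, sub_zero, abs_zero]
        have := wab_nonneg a b (p : ℝ × ℝ).2
        positivity
    have hsum3 : Summable fun p : Λ => Mconst α * wab a b (p : ℝ × ℝ).2 * S :=
      (hwab.mul_left (Mconst α)).mul_right S
    have e1 : jumpSum α Λ t₀ (t : ℝ) f - jumpSum α Λ t₀ (t : ℝ) g = ∑' p : Λ, (F p - G p) := by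
      rw [jumpSum, jumpSum, Summable.tsum_sub hFsum hGsum]
    rw [e1]
    calc |∑' p : Λ, (F p - G p)| ≤ ∑' p : Λ, |F p - G p| := by
          simpa [Real.norm_eq_abs] using
            norm_tsum_le_tsum_norm (f := fun p : Λ => F p - G p)
              (by simpa [Real.norm_eq_abs] using (hFsum.sub hGsum).abs)
      _ ≤ ∑' p : Λ, Mconst α * wab a b (p : ℝ × ℝ).2 * S :=
          Summable.tsum_le_tsum hdiff (hFsum.sub hGsum).abs hsum3
      _ = Mconst α * (∑' p : Λ, wab a b (p : ℝ × ℝ).2) * S := by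
          rw [tsum_mul_right, tsum_mul_left]
      _ ≤ (1/2) * S := mul_le_mul_of_nonneg_right hcontr.le hS0
  exact Real.iSup_le key (by positivity)
end
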